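/- Let μ be a Radon measure on a locally compact Hausdorff space X. Then the semifinite part μ_sf, defined by μ_sf(A) = sup{ μ(B) : B ⊆ A Borel, μ(B) < ∞ }, is a semifinite Borel measure on X that is inner regular (by compact sets) on all Borel sets. -/

import Mathlib

open MeasureTheory
open scoped ENNReal

/-- The semifinite part of a measure:
`μ_sf(A) = sup { μ(B) : B ⊆ A Borel, μ(B) < ∞ }`. -/
noncomputable def semifinitePart {X : Type*} [MeasurableSpace X] (μ : Measure X)
    (A : Set X) : ℝ≥0∞ :=
  ⨆ (B : Set X) (_ : MeasurableSet B) (_ : B ⊆ A) (_ : μ B ≠ ⊤), μ B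

lemma le_semifinitePart {X : Type*} [MeasurableSpace X] (μ : Measure X) {A B : Set X}
    (hB : MeasurableSet B) (hBA : B ⊆ A) (hfin : μ B ≠ ⊤) :
    μ B ≤ semifinitePart μ A :=
  le_iSup_of_le B (le_iSup_of_le hB (le_iSup_of_le hBA (le_iSup_of_le hfin le_rfl)))

lemma semifinitePart_le_measure {X : Type*} [MeasurableSpace X] (μ : Measure X) (A : Set X) :
    semifinitePart μ A ≤ μ A := by
  refine iSup_le fun B => iSup_le fun hB => iSup_le fun hBA => iSup_le fun _ => measure_mono hBA

lemma semifinitePart_eq_of_ne_top {X : Type*} [MeasurableSpace X] (μ : Measure X) {B : Set X}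
    (hB : MeasurableSet B) (hfin : μ B ≠ ⊤) : semifinitePart μ B = μ B :=
  le_antisymm (semifinitePart_le_measure μ B) (le_semifinitePart μ hB subset_rfl hfin)

lemma semifinitePart_mono {X : Type*} [MeasurableSpace X] (μ : Measure X) {A A' : Set X}
    (h : A ⊆ A') : semifinitePart μ A ≤ semifinitePart μ A' := by
  refine iSup_le fun B => iSup_le fun hB => iSup_le fun hBA => iSup_le fun hfin => ?_
  exact le_semifinitePart μ hB (hBA.trans h) hfin

/-- Superadditivity on two disjoint sets. -/
lemma semifinitePart_union_ge {X : Type*} [MeasurableSpace X] (μ : Measure X) {A A' : Set X}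
    (hd : Disjoint A A') :
    semifinitePart μ A + semifinitePart μ A' ≤ semifinitePart μ (A ∪ A') := by
  have key : ∀ C : Set X, semifinitePart μ C
      = ⨆ B : {B : Set X // MeasurableSet B ∧ B ⊆ C ∧ μ B ≠ ⊤}, μ B := by
    intro C
    apply le_antisymm
    · refine iSup_le fun B => iSup_le fun h1 => iSup_le fun h2 => iSup_le fun h3 =>
        le_iSup_of_le ⟨B, h1, h2, h3⟩ le_rfl
    · exact iSup_le fun ⟨B, h1, h2, h3⟩ => le_semifinitePart μ h1 h2 h3
  rw [key A, key A']
  have ne1 : Nonempty {B : Set X // MeasurableSet B ∧ B ⊆ A ∧ μ B ≠ ⊤} :=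
    ⟨⟨∅, MeasurableSet.empty, Set.empty_subset _, by simp⟩⟩
  have ne2 : Nonempty {B : Set X // MeasurableSet B ∧ B ⊆ A' ∧ μ B ≠ ⊤} :=
    ⟨⟨∅, MeasurableSet.empty, Set.empty_subset _, by simp⟩⟩
  refine ENNReal.iSup_add_iSup_le fun i j => ?_
  obtain ⟨B, hB, hBA, hBfin⟩ := i
  obtain ⟨C, hC, hCA, hCfin⟩ := j
  have hdBC : Disjoint B C := hd.mono hBA hCA
  have : μ B + μ C = μ (B ∪ C) := (measure_union hdBC hC).symm
  simp only [this]
  refine le_semifinitePart μ (hB.union hC) (Set.union_subset_union hBA hCA) ?_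
  rw [← this]
  exact ENNReal.add_ne_top.2 ⟨hBfin, hCfin⟩

lemma semifinitePart_iUnion {X : Type*} [MeasurableSpace X] (μ : Measure X)
    {f : ℕ → Set X} (hf : ∀ i, MeasurableSet (f i)) (hd : Pairwise (Function.onFun Disjoint f)) :
    semifinitePart μ (⋃ i, f i) = ∑' i, semifinitePart μ (f i) := by
  apply le_antisymm
  · -- subadditivity
    refine iSup_le fun B => iSup_le fun hB => iSup_le fun hBU => iSup_le fun hBfin => ?_
    have hB' : B = ⋃ i, B ∩ f i := by
      rw [← Set.inter_iUnion]; exact (Set.inter_eq_left.2 hBU).symm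
    have hmeas : ∀ i, MeasurableSet (B ∩ f i) := fun i => hB.inter (hf i)
    have hdisj : Pairwise (Function.onFun Disjoint fun i => B ∩ f i) := fun i j hij =>
      ((hd hij).mono Set.inter_subset_right Set.inter_subset_right)
    calc μ B = ∑' i, μ (B ∩ f i) := by
          conv_lhs => rw [hB']
          exact measure_iUnion hdisj hmeas
      _ ≤ ∑' i, semifinitePart μ (f i) := by
          refine ENNReal.tsum_le_tsum fun i => ?_
          refine le_semifinitePart μ (hmeas i) Set.inter_subset_right ?_
          exact fun h => hBfin (top_le_iff.1 (h ▸ measure_mono Set.inter_subset_left))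
  · -- superadditivity
    rw [ENNReal.tsum_eq_iSup_sum]
    refine iSup_le fun s => ?_
    have key : ∀ t : Finset ℕ, ∑ i ∈ t, semifinitePart μ (f i)
        ≤ semifinitePart μ (⋃ i ∈ t, f i) := by
      intro t
      induction t using Finset.induction_on with
      | empty => simp
      | @insert a t hnot ih =>
        rw [Finset.sum_insert hnot]
        have hdisj : Disjoint (f a) (⋃ i ∈ t, f i) := by
          refine Set.disjoint_iUnion₂_right.2 fun i hi => hd fun h => hnot (h ▸ hi)
        calc semifinitePart μ (f a) + ∑ i ∈ t, semifinitePart μ (f i)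
            ≤ semifinitePart μ (f a) + semifinitePart μ (⋃ i ∈ t, f i) := by gcongr
          _ ≤ semifinitePart μ (f a ∪ ⋃ i ∈ t, f i) := semifinitePart_union_ge μ hdisj
          _ = semifinitePart μ (⋃ i ∈ insert a t, f i) := by
              rw [Finset.set_biUnion_insert]
    refine (key s).trans (semifinitePart_mono μ ?_)
    exact Set.iUnion₂_subset fun i _ => Set.subset_iUnion f i

/-- Let `μ` be a Radon measure on a locally compact Hausdorff space `X`.
Then the semifinite part `μ_sf` is a Borel measure on `X` which is semifinite and inner
regular by compact sets on all Borel sets. -/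
theorem semifinitePart_isMeasure_semifinite_innerRegular
    {X : Type*} [TopologicalSpace X] [T2Space X] [LocallyCompactSpace X]
    [MeasurableSpace X] [BorelSpace X]
    (μ : Measure X) (hμ : μ.Regular) :
    ∃ ν : Measure X,
      (∀ A : Set X, MeasurableSet A → ν A = semifinitePart μ A) ∧
      (∀ A : Set X, MeasurableSet A → ν A = ⊤ →
        ∃ B : Set X, MeasurableSet B ∧ B ⊆ A ∧ 0 < ν B ∧ ν B < ⊤) ∧
      (∀ A : Set X, MeasurableSet A →
        ν A = ⨆ (K : Set X) (_ : IsCompact K) (_ : K ⊆ A), ν K) := by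
  haveI : μ.Regular := hμ
  set ν : Measure X := Measure.ofMeasurable (fun s _ => semifinitePart μ s)
    (by
      have : semifinitePart μ (∅ : Set X) ≤ μ ∅ := semifinitePart_le_measure μ ∅
      simpa using le_antisymm (by simpa using this) zero_le)
    (fun f hf hd => by
      exact semifinitePart_iUnion μ hf hd) with hν
  have happ : ∀ A : Set X, MeasurableSet A → ν A = semifinitePart μ A := fun A hA =>
    Measure.ofMeasurable_apply A hA
  refine ⟨ν, happ, ?_, ?_⟩
  · -- semifinite
    intro A hA htop
    rw [happ A hA] at htop
    have : (1 : ℝ≥0∞) < semifinitePart μ A := htop ▸ ENNReal.one_lt_top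
    rw [semifinitePart, lt_iSup_iff] at this
    obtain ⟨B, hB⟩ := this
    rw [lt_iSup_iff] at hB; obtain ⟨hBm, hB⟩ := hB
    rw [lt_iSup_iff] at hB; obtain ⟨hBA, hB⟩ := hB
    rw [lt_iSup_iff] at hB; obtain ⟨hBfin, hB⟩ := hB
    refine ⟨B, hBm, hBA, ?_, ?_⟩
    · rw [happ B hBm, semifinitePart_eq_of_ne_top μ hBm hBfin]
      exact lt_trans one_pos hB
    · rw [happ B hBm, semifinitePart_eq_of_ne_top μ hBm hBfin]
      exact lt_top_iff_ne_top.2 hBfin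
  · -- inner regular by compacts
    intro A hA
    rw [happ A hA]
    apply le_antisymm
    · refine iSup_le fun B => iSup_le fun hB => iSup_le fun hBA => iSup_le fun hBfin => ?_
      rw [hB.measure_eq_iSup_isCompact_of_ne_top hBfin]
      refine iSup_le fun K => iSup_le fun hKB => iSup_le fun hK => ?_
      have hKm : MeasurableSet K := hK.measurableSet
      have hKfin : μ K ≠ ⊤ := hK.measure_lt_top.ne
      refine le_iSup_of_le K (le_iSup_of_le hK (le_iSup_of_le (hKB.trans hBA) ?_))
      rw [happ K hKm, semifinitePart_eq_of_ne_top μ hKm hKfin]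
    · refine iSup_le fun K => iSup_le fun hK => iSup_le fun hKA => ?_
      have hKm : MeasurableSet K := hK.measurableSet
      have hKfin : μ K ≠ ⊤ := hK.measure_lt_top.ne
      rw [happ K hKm, semifinitePart_eq_of_ne_top μ hKm hKfin]
      exact le_semifinitePart μ hKm hKA hKfin
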